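/- Theorem 3.7 (abstract form): The set Γ = {w ∈ R : supp(w) ∩ B₀ = ∅} is a subgroup of R; Γ ∩ ker φ is trivial; every element of R is a product of an element of Γ and an element of ker φ; hence R is the internal semidirect product Γ ⋉ ker φ. Moreover φ restricted to Γ is injective, so Γ is isomorphic to the image of φ. -/

import Mathlib

/-! Theorem 3.7 (abstract form): `R(σ) = Γ ⋉ R(π)`. -/

open Multiplicative

/-- The action of a permutation `s` of `Fin r` on sign vectors `c : Fin r → ZMod 2`
(written multiplicatively), given by `(s • c) (s i) = c i`. -/
def permMulAut (r : ℕ) : Equiv.Perm (Fin r) →* MulAut (Multiplicative (Fin r → ZMod 2)) where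
  toFun s := AddEquiv.toMultiplicative (AddEquiv.arrowCongr s (AddEquiv.refl (ZMod 2)))
  map_one' := by ext c; rfl
  map_mul' s t := by ext c; rfl

/-- The group `W_r = (Fin r → ZMod 2) ⋊ Perm (Fin r)` of signed permutations, with
multiplication `(c₁, s₁)·(c₂, s₂) = (c₁ + s₁ • c₂, s₁ s₂)`. -/
abbrev SignedPerm (r : ℕ) : Type :=
  (Multiplicative (Fin r → ZMod 2)) ⋊[permMulAut r] (Equiv.Perm (Fin r))

/-- The sign-change element `C_B = (1_B, id)` attached to `B ⊆ Fin r`. -/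
def CB {r : ℕ} (B : Finset (Fin r)) : SignedPerm r :=
  ⟨Multiplicative.ofAdd (fun i => if i ∈ B then 1 else 0), 1⟩

/-- The support `supp w = {i : c i = 1}` of the sign part of a signed permutation. -/
def suppW {r : ℕ} (w : SignedPerm r) : Finset (Fin r) :=
  Finset.univ.filter (fun i => Multiplicative.toAdd w.left i = 1)

namespace RAux
variable {r : ℕ}

lemma zmod2_cases (x : ZMod 2) : x = 0 ∨ x = 1 := by revert x; decide

lemma ext' {w₁ w₂ : SignedPerm r}
    (h1 : ∀ i, Multiplicative.toAdd w₁.left i = Multiplicative.toAdd w₂.left i)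
    (h2 : w₁.right = w₂.right) : w₁ = w₂ :=
  SemidirectProduct.ext (Multiplicative.toAdd.injective (funext h1)) h2

lemma mem_suppW {w : SignedPerm r} {i : Fin r} :
    i ∈ suppW w ↔ Multiplicative.toAdd w.left i = 1 := by
  simp [suppW]

lemma CB_right (B : Finset (Fin r)) : (CB B).right = 1 := rfl

lemma CB_left_apply (B : Finset (Fin r)) (i : Fin r) :
    Multiplicative.toAdd (CB B).left i = if i ∈ B then 1 else 0 := rfl

lemma mul_left_apply (w₁ w₂ : SignedPerm r) (i : Fin r) :
    Multiplicative.toAdd (w₁ * w₂).left i =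
      Multiplicative.toAdd w₁.left i + Multiplicative.toAdd w₂.left (w₁.right.symm i) := rfl

lemma inv_left_apply (w : SignedPerm r) (i : Fin r) :
    Multiplicative.toAdd (w⁻¹).left i = - Multiplicative.toAdd w.left (w.right i) := rfl

lemma mul_right' (w₁ w₂ : SignedPerm r) : (w₁ * w₂).right = w₁.right * w₂.right := rfl
lemma inv_right' (w : SignedPerm r) : (w⁻¹).right = w.right⁻¹ := rfl

lemma suppW_CB (B : Finset (Fin r)) : suppW (CB B) = B := by
  ext i
  rw [mem_suppW, CB_left_apply]
  split <;> simp_all <;> decide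

lemma one_left_apply (i : Fin r) : Multiplicative.toAdd (1 : SignedPerm r).left i = 0 := rfl

lemma CB_mul_self (B : Finset (Fin r)) : CB B * CB B = 1 := by
  refine ext' (fun i => ?_) ?_
  · rw [mul_left_apply, CB_left_apply, CB_left_apply, one_left_apply, CB_right]
    have h0 : (Equiv.symm (1 : Equiv.Perm (Fin r))) i = i := rfl
    rw [h0]
    by_cases h : i ∈ B <;> simp [h] <;> decide
  · rfl

lemma CB_empty : CB (∅ : Finset (Fin r)) = 1 := by
  refine ext' (fun i => ?_) rfl
  rw [CB_left_apply, one_left_apply]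
  simp

lemma conj_CB (w : SignedPerm r) (B : Finset (Fin r)) :
    w * CB B * w⁻¹ = CB (B.image w.right) := by
  refine ext' (fun i => ?_) ?_
  · rw [mul_left_apply, mul_left_apply, inv_left_apply, CB_left_apply, CB_left_apply]
    rw [mul_right', CB_right, mul_one]
    simp only [Equiv.apply_symm_apply]
    have hmem : (Equiv.symm w.right) i ∈ B ↔ i ∈ Finset.image (⇑w.right) B := by
      simp only [Finset.mem_image]
      constructor
      · intro h; exact ⟨_, h, by simp⟩
      · rintro ⟨a, ha, rfl⟩; simpa using ha
    rw [if_congr hmem rfl rfl]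
    ring
  · simp [mul_right', inv_right', CB_right]

end RAux

open RAux in
theorem R_group_semidirect_decomposition
    {r : ℕ} (hr : 1 ≤ r) (R : Subgroup (SignedPerm r)) (B₀ : Finset (Fin r))
    {A : Type*} [Group A] (φ : ↥R →* A)
    (hCB : ∀ B : Finset (Fin r), B ⊆ B₀ → CB B ∈ R)
    (hker : ∀ w : ↥R, φ w = 1 ↔
      ∃ B : Finset (Fin r), B ⊆ B₀ ∧ (w : SignedPerm r) = CB B) :
    ∃ Γ : Subgroup (SignedPerm r),
      -- `Γ = {w ∈ R : supp w ∩ B₀ = ∅}` is a subgroup (of `W_r`, contained in `R`)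
      ((Γ : Set (SignedPerm r)) =
        {w : SignedPerm r | w ∈ R ∧ suppW w ∩ B₀ = ∅}) ∧
      -- `Γ ∩ ker φ` is trivial
      (∀ w : ↥R, φ w = 1 → (w : SignedPerm r) ∈ Γ → (w : SignedPerm r) = 1) ∧
      -- every element of `R` is a product of an element of `Γ` and one of `ker φ`
      (∀ w : ↥R, ∃ (a : SignedPerm r) (b : ↥R), a ∈ Γ ∧ φ b = 1 ∧
        (w : SignedPerm r) = a * (b : SignedPerm r)) ∧
      -- `φ` is injective on `Γ`
      (∀ w₁ w₂ : ↥R, (w₁ : SignedPerm r) ∈ Γ → (w₂ : SignedPerm r) ∈ Γ →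
        φ w₁ = φ w₂ → w₁ = w₂) ∧
      -- so `Γ` is isomorphic to the image of `φ`
      ∃ e : ↥Γ ≃* ↥φ.range,
        ∀ (g : ↥Γ) (hg : (g : SignedPerm r) ∈ R), (e g : A) = φ ⟨(g : SignedPerm r), hg⟩ := by
  classical
  -- the permutation part of any element of R maps B₀ into B₀
  have hpres : ∀ w : SignedPerm r, w ∈ R → ∀ i ∈ B₀, w.right i ∈ B₀ := by
    intro w hw i hi
    have hi' : ({i} : Finset (Fin r)) ⊆ B₀ := by simpa using hi
    have h1 : φ ⟨CB {i}, hCB {i} hi'⟩ = 1 := (hker _).mpr ⟨{i}, hi', rfl⟩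
    have h2 : φ (⟨w, hw⟩ * ⟨CB {i}, hCB {i} hi'⟩ * (⟨w, hw⟩)⁻¹) = 1 := by
      rw [map_mul, map_mul, map_inv, h1, mul_one, mul_inv_cancel]
    obtain ⟨B', hB', hEq⟩ := (hker _).mp h2
    have hEq' : w * CB {i} * w⁻¹ = CB B' := by
      simpa using hEq
    rw [conj_CB] at hEq'
    have hsupp := congrArg suppW hEq'
    rw [suppW_CB, suppW_CB] at hsupp
    apply hB'
    rw [← hsupp]
    simp
  have hpres_iff : ∀ w : SignedPerm r, w ∈ R → ∀ i, (w.right i ∈ B₀ ↔ i ∈ B₀) := by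
    intro w hw i
    constructor
    · intro h
      have := hpres w⁻¹ (R.inv_mem hw) _ h
      rwa [inv_right', Equiv.Perm.inv_def, Equiv.symm_apply_apply] at this
    · exact hpres w hw i
  -- zero on B₀ for members of the candidate set
  have hzero : ∀ w : SignedPerm r, suppW w ∩ B₀ = ∅ → ∀ i ∈ B₀,
      Multiplicative.toAdd w.left i = 0 := by
    intro w hw i hi
    rcases zmod2_cases (Multiplicative.toAdd w.left i) with h | h
    · exact h
    · exact absurd (Finset.mem_inter.mpr ⟨mem_suppW.mpr h, hi⟩) (by simp [hw])
  have hempty : ∀ w : SignedPerm r, (∀ i ∈ B₀, Multiplicative.toAdd w.left i = 0) →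
      suppW w ∩ B₀ = ∅ := by
    intro w h
    rw [Finset.eq_empty_iff_forall_notMem]
    intro i hi
    rcases Finset.mem_inter.mp hi with ⟨h1, h2⟩
    rw [mem_suppW] at h1
    rw [h i h2] at h1
    exact absurd h1 (by decide)
  -- the subgroup Γ
  have hone : (1 : SignedPerm r) ∈ R ∧ suppW (1 : SignedPerm r) ∩ B₀ = ∅ :=
    ⟨R.one_mem, hempty 1 (fun i _ => rfl)⟩
  have hmulc : ∀ a b : SignedPerm r, (a ∈ R ∧ suppW a ∩ B₀ = ∅) →
      (b ∈ R ∧ suppW b ∩ B₀ = ∅) → (a * b ∈ R ∧ suppW (a * b) ∩ B₀ = ∅) := by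
    rintro a b ⟨haR, has⟩ ⟨hbR, hbs⟩
    refine ⟨R.mul_mem haR hbR, hempty _ (fun i hi => ?_)⟩
    rw [mul_left_apply]
    have h1 : Multiplicative.toAdd a.left i = 0 := hzero a has i hi
    have h2 : a.right.symm i ∈ B₀ := by
      refine (hpres_iff a haR _).mp ?_
      simpa using hi
    rw [h1, hzero b hbs _ h2, add_zero]
  have hinvc : ∀ a : SignedPerm r, (a ∈ R ∧ suppW a ∩ B₀ = ∅) →
      (a⁻¹ ∈ R ∧ suppW a⁻¹ ∩ B₀ = ∅) := by
    rintro a ⟨haR, has⟩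
    refine ⟨R.inv_mem haR, hempty _ (fun i hi => ?_)⟩
    rw [inv_left_apply, hzero a has _ (hpres a haR i hi), neg_zero]
  set Γ : Subgroup (SignedPerm r) :=
    { carrier := {w : SignedPerm r | w ∈ R ∧ suppW w ∩ B₀ = ∅}
      one_mem' := hone
      mul_mem' := fun ha hb => hmulc _ _ ha hb
      inv_mem' := fun ha => hinvc _ ha } with hΓ
  have hmemΓ : ∀ w : SignedPerm r, w ∈ Γ ↔ (w ∈ R ∧ suppW w ∩ B₀ = ∅) := fun w => Iff.rfl
  -- trivial intersection
  have htriv : ∀ w : ↥R, φ w = 1 → (w : SignedPerm r) ∈ Γ → (w : SignedPerm r) = 1 := by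
    intro w hφ hwΓ
    obtain ⟨B, hB, hEq⟩ := (hker w).mp hφ
    have h2 := ((hmemΓ _).mp hwΓ).2
    rw [hEq, suppW_CB, Finset.inter_eq_left.mpr hB] at h2
    rw [hEq, h2, CB_empty]
  -- decomposition
  have hdecomp : ∀ w : ↥R, ∃ (a : SignedPerm r) (b : ↥R), a ∈ Γ ∧ φ b = 1 ∧
      (w : SignedPerm r) = a * (b : SignedPerm r) := by
    intro w
    set s : Equiv.Perm (Fin r) := (w : SignedPerm r).right with hs
    set Bw : Finset (Fin r) := suppW (w : SignedPerm r) ∩ B₀ with hBw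
    set B' : Finset (Fin r) := Bw.image s.symm with hB'def
    have hB' : B' ⊆ B₀ := by
      intro j hj
      rw [hB'def, Finset.mem_image] at hj
      obtain ⟨k, hk, rfl⟩ := hj
      have hkB₀ : k ∈ B₀ := (Finset.mem_inter.mp hk).2
      refine (hpres_iff _ w.2 _).mp ?_
      simpa [hs] using hkB₀
    have hbR : CB B' ∈ R := hCB B' hB'
    refine ⟨(w : SignedPerm r) * CB B', ⟨CB B', hbR⟩, ?_, (hker _).mpr ⟨B', hB', rfl⟩, ?_⟩
    · refine (hmemΓ _).mpr ⟨R.mul_mem w.2 hbR, hempty _ (fun i hi => ?_)⟩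
      rw [mul_left_apply, CB_left_apply]
      have hcond : (s.symm i ∈ B') ↔ i ∈ Bw := by
        rw [hB'def, Finset.mem_image]
        constructor
        · rintro ⟨k, hk, hki⟩
          rwa [← s.symm.injective hki]
        · intro h; exact ⟨i, h, rfl⟩
      rw [if_congr hcond rfl rfl]
      rcases zmod2_cases (Multiplicative.toAdd (w : SignedPerm r).left i) with h | h
      · have : i ∉ Bw := by
          rw [hBw, Finset.mem_inter, mem_suppW]
          intro hc
          rw [h] at hc
          exact absurd hc.1 (by decide)
        rw [h, if_neg this, add_zero]
      · have : i ∈ Bw := Finset.mem_inter.mpr ⟨mem_suppW.mpr h, hi⟩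
        rw [h, if_pos this]
        decide
    · rw [mul_assoc, CB_mul_self, mul_one]
  -- injectivity on Γ
  have hinj : ∀ w₁ w₂ : ↥R, (w₁ : SignedPerm r) ∈ Γ → (w₂ : SignedPerm r) ∈ Γ →
      φ w₁ = φ w₂ → w₁ = w₂ := by
    intro w₁ w₂ h1 h2 heq
    have hφ : φ (w₁⁻¹ * w₂) = 1 := by
      rw [map_mul, map_inv, heq, inv_mul_cancel]
    have hmem : ((w₁⁻¹ * w₂ : ↥R) : SignedPerm r) ∈ Γ := by
      have : ((w₁⁻¹ * w₂ : ↥R) : SignedPerm r) = (w₁ : SignedPerm r)⁻¹ * w₂ := rfl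
      rw [this]
      exact Γ.mul_mem (Γ.inv_mem h1) h2
    have := htriv _ hφ hmem
    have h0 : w₁⁻¹ * w₂ = 1 := Subtype.ext this
    exact inv_mul_eq_one.mp h0
  -- the isomorphism
  have hΓR : ∀ g : SignedPerm r, g ∈ Γ → g ∈ R := fun g hg => ((hmemΓ _).mp hg).1
  let f : ↥Γ →* ↥φ.range :=
    { toFun := fun g => ⟨φ ⟨(g : SignedPerm r), hΓR _ g.2⟩, ⟨_, rfl⟩⟩
      map_one' := by
        ext
        show φ ⟨((1 : ↥Γ) : SignedPerm r), _⟩ = 1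
        have h1 : (⟨((1 : ↥Γ) : SignedPerm r), hΓR _ (1 : ↥Γ).2⟩ : ↥R) = 1 := Subtype.ext rfl
        rw [h1, map_one]
      map_mul' := fun g₁ g₂ => by
        ext
        show φ ⟨_, _⟩ = φ ⟨_, _⟩ * φ ⟨_, _⟩
        rw [← map_mul]
        exact congrArg φ (Subtype.ext rfl) }
  have hfinj : Function.Injective f := by
    intro g₁ g₂ h
    have h' : φ ⟨(g₁ : SignedPerm r), hΓR _ g₁.2⟩ = φ ⟨(g₂ : SignedPerm r), hΓR _ g₂.2⟩ :=
      Subtype.ext_iff.mp h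
    have h2 := hinj _ _ g₁.2 g₂.2 h'
    have hcoe : (g₁ : SignedPerm r) = (g₂ : SignedPerm r) := by simpa using h2
    exact Subtype.ext hcoe
  have hfsurj : Function.Surjective f := by
    rintro ⟨x, wR, rfl⟩
    obtain ⟨a, b, haΓ, hb, hw⟩ := hdecomp wR
    refine ⟨⟨a, haΓ⟩, ?_⟩
    ext
    show φ ⟨a, _⟩ = φ wR
    have hwR : wR = ⟨a, hΓR _ haΓ⟩ * b := Subtype.ext hw
    rw [hwR, map_mul, hb, mul_one]
  refine ⟨Γ, rfl, htriv, hdecomp, hinj,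
    MulEquiv.ofBijective f ⟨hfinj, hfsurj⟩, fun g hg => ?_⟩
  exact congrArg φ (Subtype.ext rfl)
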